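/- Let X be a real random variable with density f that is continuous at x∈ℝ, and let K : ℝ → ℝ be bounded, measurable, with compact support. Then lim_{h→0⁺} h·E[ (h^{−1}K((x−X)/h))² ] = f(x)·∫K(u)²du. -/

import Mathlib

open MeasureTheory Filter Set

noncomputable section

namespace DyadicKDE

lemma aux_scale (g : ℝ → ℝ) (x h : ℝ) (hh : 0 < h) :
    (∫ t, g ((x - t) / h)) = h * ∫ u, g u := by
  calc (∫ t, g ((x - t) / h)) = ∫ s, g (s / h) :=
        integral_sub_left_eq_self (fun s => g (s / h)) volume x
    _ = |h| • ∫ u, g u := Measure.integral_comp_div _ h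
    _ = h * ∫ u, g u := by rw [abs_of_pos hh, smul_eq_mul]

lemma aux_le (w : ℝ → ENNReal) {I : Set ℝ} (hI : MeasurableSet I)
    (c : ENNReal) (hc : ∀ t ∈ I, w t ≤ c) (φ : ℝ → ENNReal) :
    ∫⁻ t in I, φ t ∂(volume.withDensity w) ≤ c * ∫⁻ t in I, φ t ∂volume := by
  have hle : (volume.withDensity w).restrict I ≤ c • volume.restrict I := by
    refine Measure.le_iff.2 fun s hs => ?_
    rw [Measure.restrict_apply hs, withDensity_apply _ (hs.inter hI),
        Measure.smul_apply, Measure.restrict_apply hs, smul_eq_mul]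
    calc ∫⁻ t in s ∩ I, w t ∂volume ≤ ∫⁻ _ in s ∩ I, c ∂volume := by
          refine lintegral_mono_ae ?_
          filter_upwards [ae_restrict_mem (hs.inter hI)] with t ht
          exact hc t ht.2
      _ = c * volume (s ∩ I) := by rw [setLIntegral_const]
  calc ∫⁻ t in I, φ t ∂(volume.withDensity w)
      ≤ ∫⁻ t, φ t ∂(c • volume.restrict I) := lintegral_mono' hle le_rfl
    _ = c * ∫⁻ t in I, φ t ∂volume := lintegral_smul_measure _ _

lemma aux_ge (w : ℝ → ENNReal) {I : Set ℝ} (hI : MeasurableSet I)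
    (c : ENNReal) (hc : ∀ t ∈ I, c ≤ w t) (φ : ℝ → ENNReal) :
    c * ∫⁻ t in I, φ t ∂volume ≤ ∫⁻ t in I, φ t ∂(volume.withDensity w) := by
  have hle : c • volume.restrict I ≤ (volume.withDensity w).restrict I := by
    refine Measure.le_iff.2 fun s hs => ?_
    rw [Measure.restrict_apply hs, withDensity_apply _ (hs.inter hI),
        Measure.smul_apply, Measure.restrict_apply hs, smul_eq_mul]
    calc c * volume (s ∩ I) = ∫⁻ _ in s ∩ I, c ∂volume := by rw [setLIntegral_const]
      _ ≤ ∫⁻ t in s ∩ I, w t ∂volume := by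
          refine lintegral_mono_ae ?_
          filter_upwards [ae_restrict_mem (hs.inter hI)] with t ht
          exact hc t ht.2
  calc c * ∫⁻ t in I, φ t ∂volume = ∫⁻ t, φ t ∂(c • volume.restrict I) :=
        by rw [lintegral_smul_measure, smul_eq_mul]
    _ ≤ ∫⁻ t in I, φ t ∂(volume.withDensity w) := lintegral_mono' hle le_rfl

/-- **Leading variance constant of the KDE.** If `X` has density `f` continuous at `x` and
`K` is bounded, measurable with compact support, then
`h · E[(h⁻¹ K((x-X)/h))²] → f(x) ∫ K(u)² du` as `h → 0⁺`. -/
theorem kde_second_moment_limit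
    {Ω : Type} [MeasurableSpace Ω] (P : Measure Ω) [IsProbabilityMeasure P]
    (X : Ω → ℝ) (hX : Measurable X) (f : ℝ → ℝ) (hf0 : ∀ t, 0 ≤ f t)
    (hdens : Measure.map X P = volume.withDensity fun t => ENNReal.ofReal (f t))
    (x : ℝ) (hfx : ContinuousAt f x)
    (K : ℝ → ℝ) (hKmeas : Measurable K) (hKbdd : ∃ C : ℝ, ∀ u, |K u| ≤ C)
    (hKsupp : HasCompactSupport K) :
    Tendsto (fun h : ℝ => h * ∫ ω, (h⁻¹ * K ((x - X ω) / h)) ^ 2 ∂P)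
      (nhdsWithin 0 (Ioi (0 : ℝ)))
      (nhds (f x * ∫ u, K u ^ 2)) := by
  obtain ⟨C, hC⟩ := hKbdd
  -- a radius outside which K vanishes
  obtain ⟨M0, hM0⟩ : ∃ M0 : ℝ, tsupport K ⊆ Metric.closedBall 0 M0 :=
    hKsupp.isBounded.subset_closedBall 0
  set M : ℝ := |M0| + 1 with hMdef
  have hMpos : 0 < M := by positivity
  have hK0 : ∀ u : ℝ, M ≤ |u| → K u = 0 := by
    intro u hu
    apply image_eq_zero_of_notMem_tsupport
    intro hmem
    have := hM0 hmem
    rw [Metric.mem_closedBall, Real.dist_eq, sub_zero] at this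
    have : |u| ≤ |M0| := this.trans (le_abs_self _)
    linarith
  set J : ℝ := ∫ u, K u ^ 2 with hJdef
  have hJ0 : 0 ≤ J := integral_nonneg fun u => sq_nonneg _
  rw [Metric.tendsto_nhdsWithin_nhds]
  intro ε hε
  set ε₁ : ℝ := ε / (2 * (J + 1)) with hε₁def
  have hε₁ : 0 < ε₁ := by positivity
  obtain ⟨δ₁, hδ₁, hδ₁f⟩ := Metric.continuousAt_iff.1 hfx ε₁ hε₁
  refine ⟨δ₁ / M, by positivity, ?_⟩
  intro h hh hhd
  simp only [mem_Ioi] at hh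
  rw [Real.dist_eq, sub_zero, abs_of_pos hh] at hhd
  have hhMδ : h * M < δ₁ := by
    rw [lt_div_iff₀ hMpos] at hhd; exact hhd
  set I : Set ℝ := Icc (x - h * M) (x + h * M) with hIdef
  have hI : MeasurableSet I := measurableSet_Icc
  set φ : ℝ → ENNReal := fun t => ENNReal.ofReal (K ((x - t) / h) ^ 2) with hφdef
  have hφmeas : Measurable φ :=
    ((hKmeas.comp ((measurable_const.sub measurable_id).div_const h)).pow_const 2).ennreal_ofReal
  have hφ0 : ∀ t ∉ I, φ t = 0 := by
    intro t ht
    have hhM : 0 < h * M := mul_pos hh hMpos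
    have habs : h * M < |x - t| := by
      have hcase : t < x - h * M ∨ x + h * M < t := by
        by_contra hcon
        push_neg at hcon
        exact ht ⟨hcon.1, hcon.2⟩
      rcases hcase with h1 | h1
      · rw [abs_of_pos (by linarith)]; linarith
      · rw [abs_of_neg (by linarith)]; linarith
    have : M ≤ |(x - t) / h| := by
      rw [abs_div, abs_of_pos hh, le_div_iff₀ hh]
      linarith [habs]
    simp [hφdef, hK0 _ this]
  have hind : ∀ ν : Measure ℝ, ∫⁻ t, φ t ∂ν = ∫⁻ t in I, φ t ∂ν := by
    intro ν
    rw [← lintegral_indicator hI]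
    congr 1
    funext t
    by_cases ht : t ∈ I
    · rw [indicator_of_mem ht]
    · rw [indicator_of_notMem ht, hφ0 t ht]
  -- pointwise bounds on the density on I
  have hfI : ∀ t ∈ I, |f t - f x| < ε₁ := by
    intro t ht
    have h1 : |t - x| ≤ h * M := by
      rw [abs_le]
      constructor <;> [linarith [ht.1]; linarith [ht.2]]
    have := hδ₁f (show dist t x < δ₁ by rw [Real.dist_eq]; linarith)
    rwa [Real.dist_eq] at this
  -- the Lebesgue-side integral
  set Λ : ENNReal := ∫⁻ t in I, φ t ∂volume with hΛdef
  have hΛne : Λ ≠ ⊤ := by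
    have hb : Λ ≤ ENNReal.ofReal (C ^ 2) * volume I := by
      rw [hΛdef, ← setLIntegral_const I (ENNReal.ofReal (C ^ 2))]
      refine lintegral_mono fun t => ?_
      refine ENNReal.ofReal_le_ofReal ?_
      have := hC ((x - t) / h)
      nlinarith [abs_nonneg (K ((x - t) / h)), sq_abs (K ((x - t) / h))]
    exact ne_top_of_le_ne_top
      (ENNReal.mul_ne_top ENNReal.ofReal_ne_top measure_Icc_lt_top.ne) hb
  have hΛtoReal : Λ.toReal = h * J := by
    have hm2 : Measurable fun t : ℝ => K ((x - t) / h) ^ 2 :=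
      (hKmeas.comp ((measurable_const.sub measurable_id).div_const h)).pow_const 2
    have h1 : (∫ t, K ((x - t) / h) ^ 2) = Λ.toReal := by
      rw [integral_eq_lintegral_of_nonneg_ae (Eventually.of_forall fun t => sq_nonneg _)
        hm2.aestronglyMeasurable, hΛdef, ← hind volume]
    rw [← h1, aux_scale (fun u => K u ^ 2) x h hh, hJdef]
  -- the main integral, as a lintegral against the law of X
  set L : ENNReal := ∫⁻ t in I, φ t ∂(Measure.map X P) with hLdef
  have hLle : L ≤ ENNReal.ofReal (f x + ε₁) * Λ := by
    rw [hLdef, hdens, hΛdef]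
    refine aux_le _ hI _ (fun t ht => ?_) φ
    exact ENNReal.ofReal_le_ofReal (by linarith [(abs_lt.1 (hfI t ht)).2])
  have hLge : ENNReal.ofReal (f x - ε₁) * Λ ≤ L := by
    rw [hLdef, hdens, hΛdef]
    refine aux_ge _ hI _ (fun t ht => ?_) φ
    exact ENNReal.ofReal_le_ofReal (by linarith [(abs_lt.1 (hfI t ht)).1])
  have hLne : L ≠ ⊤ :=
    ne_top_of_le_ne_top (ENNReal.mul_ne_top ENNReal.ofReal_ne_top hΛne) hLle
  -- rewrite the expectation
  have hexp : h * ∫ ω, (h⁻¹ * K ((x - X ω) / h)) ^ 2 ∂P = h⁻¹ * L.toReal := by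
    have hm : Measurable fun ω => (h⁻¹ * K ((x - X ω) / h)) ^ 2 := by
      exact (measurable_const.mul
        (hKmeas.comp ((measurable_const.sub hX).div_const h))).pow_const 2
    rw [integral_eq_lintegral_of_nonneg_ae (Eventually.of_forall fun ω => sq_nonneg _)
      hm.aestronglyMeasurable]
    have h2 : ∀ ω, ENNReal.ofReal ((h⁻¹ * K ((x - X ω) / h)) ^ 2)
        = ENNReal.ofReal (h⁻¹ ^ 2) * φ (X ω) := by
      intro ω
      rw [hφdef, mul_pow, ENNReal.ofReal_mul (by positivity)]
    simp only [h2]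
    rw [lintegral_const_mul' _ _ ENNReal.ofReal_ne_top]
    have h3 : ∫⁻ ω, φ (X ω) ∂P = L := by
      rw [hLdef, ← hind (Measure.map X P), lintegral_map hφmeas hX]
    rw [h3, ENNReal.toReal_mul, ENNReal.toReal_ofReal (by positivity)]
    field_simp
  rw [hexp, Real.dist_eq]
  -- numeric bounds
  have hub : L.toReal ≤ (f x + ε₁) * (h * J) := by
    have := ENNReal.toReal_mono (ENNReal.mul_ne_top ENNReal.ofReal_ne_top hΛne) hLle
    rwa [ENNReal.toReal_mul, ENNReal.toReal_ofReal (by linarith [hf0 x]), hΛtoReal] at this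
  have hlb : (f x - ε₁) * (h * J) ≤ L.toReal := by
    have h1 := ENNReal.toReal_mono hLne hLge
    rw [ENNReal.toReal_mul, hΛtoReal] at h1
    have h2 : (f x - ε₁) * (h * J) ≤ (ENNReal.ofReal (f x - ε₁)).toReal * (h * J) := by
      refine mul_le_mul_of_nonneg_right ?_ (by positivity)
      rcases le_or_gt (f x - ε₁) 0 with hc | hc
      · exact hc.trans ENNReal.toReal_nonneg
      · rw [ENNReal.toReal_ofReal hc.le]
    linarith
  have hfin1 : h⁻¹ * L.toReal ≤ (f x + ε₁) * J := by
    have := mul_le_mul_of_nonneg_left hub (le_of_lt (inv_pos.2 hh))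
    calc h⁻¹ * L.toReal ≤ h⁻¹ * ((f x + ε₁) * (h * J)) := this
      _ = (f x + ε₁) * J := by field_simp
  have hfin2 : (f x - ε₁) * J ≤ h⁻¹ * L.toReal := by
    have := mul_le_mul_of_nonneg_left hlb (le_of_lt (inv_pos.2 hh))
    calc (f x - ε₁) * J = h⁻¹ * ((f x - ε₁) * (h * J)) := by field_simp
      _ ≤ h⁻¹ * L.toReal := this
  have hεJ : ε₁ * J < ε := by
    have h1 : ε₁ * (J + 1) = ε / 2 := by
      rw [hε₁def]; field_simp
    nlinarith
  rw [abs_lt]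
  constructor <;> nlinarith
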